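/- Let (X,d) be a metric space with depot s ∈ X, let V ⊆ X be a finite set of clients, and let τ : V → ℕ with τ(v) ≥ 1. Define τ'(v) = 2^⌊log₂ τ(v)⌋ (τ rounded down to a power of 2). Then the min-avg value of the instance (V,τ') is at most 2 times the min-avg value of the instance (V,τ). -/

import Mathlib

open scoped BigOperators

/-- A schedule on the client set `V` (day `k ≥ 1` visits `J k ⊆ V`) is feasible for
turnover times `τ`: every client `v ∈ V` is visited in every window of `τ v` days. -/
def FeasibleOn {X : Type*} (V : Finset X) (τ : X → ℕ) (J : ℕ → Finset X) : Prop :=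
  (∀ k : ℕ, J k ⊆ V) ∧ ∀ v ∈ V, ∀ t : ℕ, ∃ k : ℕ, t < k ∧ k ≤ t + τ v ∧ v ∈ J k

/-- The cost of the route `s, v₁, …, v_r, s` where `l = [v₁, …, v_r]`. -/
def routeLen {X : Type*} (d : X → X → ℝ) (s : X) (l : List X) : ℝ :=
  (List.zip (s :: l) (l ++ [s])).foldr (fun p acc => d p.1 p.2 + acc) 0

/-- The tour cost of a finite set `S`: the minimum over all orderings `v₁,…,v_r` of the
elements of `S` of `d s v₁ + ∑ d vᵢ vᵢ₊₁ + d v_r s`, with `c ∅ = 0`. -/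
noncomputable def tourCost {X : Type*} [DecidableEq X] (d : X → X → ℝ) (s : X)
    (S : Finset X) : ℝ :=
  if S = ∅ then 0
  else sInf {x : ℝ | ∃ l : List X, l.Nodup ∧ l.toFinset = S ∧ x = routeLen d s l}

/-- The min-avg value of the instance `(V, τ)` in a metric space with depot `s`:
the infimum over feasible periodic schedules of the average daily tour cost. -/
noncomputable def minAvgVal {X : Type*} [MetricSpace X] [DecidableEq X] (s : X)
    (V : Finset X) (τ : X → ℕ) : ℝ :=
  sInf {x : ℝ | ∃ (J : ℕ → Finset X) (ℓ : ℕ), 1 ≤ ℓ ∧ (∀ k : ℕ, J (k + ℓ) = J k) ∧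
    FeasibleOn V τ J ∧
    x = (∑ k ∈ Finset.Icc 1 ℓ, tourCost dist s (J k)) / (ℓ : ℝ)}

section Aux

variable {X : Type*}

/-- Length of a path (sum of consecutive distances). -/
def plen (d : X → X → ℝ) : List X → ℝ
  | [] => 0
  | [_] => 0
  | a :: b :: t => d a b + plen d (b :: t)

lemma plen_cons_cons (d : X → X → ℝ) (a b : X) (t : List X) :
    plen d (a :: b :: t) = d a b + plen d (b :: t) := rfl

lemma routeLen_eq_plen (d : X → X → ℝ) (s : X) (l : List X) :
    routeLen d s l = plen d (s :: (l ++ [s])) := by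
  suffices h : ∀ (l : List X) (a c : X),
      (List.zip (a :: l) (l ++ [c])).foldr (fun p acc => d p.1 p.2 + acc) 0
        = plen d (a :: (l ++ [c])) from h l s s
  intro l
  induction l with
  | nil => intro a c; simp [plen]
  | cons x t ih =>
      intro a c
      simp only [List.cons_append, List.zip_cons_cons, List.foldr_cons, ih x c, plen_cons_cons]

lemma plen_nonneg (d : X → X → ℝ) (hd : ∀ x y, 0 ≤ d x y) : ∀ l : List X, 0 ≤ plen d l
  | [] => le_refl 0
  | [_] => le_refl 0
  | a :: b :: t => add_nonneg (hd a b) (plen_nonneg d hd (b :: t))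

lemma plen_skip (d : X → X → ℝ) (hd : ∀ x y, 0 ≤ d x y)
    (htri : ∀ x y z, d x z ≤ d x y + d y z) (a x : X) :
    ∀ m : List X, plen d (a :: m) ≤ d a x + plen d (x :: m)
  | [] => by simpa [plen] using hd a x
  | b :: t => by
      rw [plen_cons_cons, plen_cons_cons]
      have := htri a x b
      linarith

lemma plen_sublist (d : X → X → ℝ) (hd : ∀ x y, 0 ≤ d x y)
    (htri : ∀ x y z, d x z ≤ d x y + d y z) {l' l : List X} (h : l'.Sublist l) :
    ∀ a b : X, plen d (a :: (l' ++ [b])) ≤ plen d (a :: (l ++ [b])) := by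
  induction h with
  | slnil => intro a b; exact le_refl _
  | @cons l₁ l₂ x _ ih =>
      intro a b
      calc plen d (a :: (l₁ ++ [b])) ≤ d a x + plen d (x :: (l₁ ++ [b])) :=
            plen_skip d hd htri a x _
        _ ≤ d a x + plen d (x :: (l₂ ++ [b])) := by linarith [ih x b]
        _ = plen d (a :: ((x :: l₂) ++ [b])) := by
              rw [List.cons_append, plen_cons_cons]
  | @cons_cons l₁ l₂ x _ ih =>
      intro a b
      rw [List.cons_append, List.cons_append, plen_cons_cons, plen_cons_cons]
      linarith [ih x b]

lemma plen_concat (d : X → X → ℝ) (hd : ∀ x y, 0 ≤ d x y)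
    (htri : ∀ x y z, d x z ≤ d x y + d y z) (s : X) (l2 : List X) :
    ∀ (l1 : List X) (a : X),
      plen d (a :: ((l1 ++ l2) ++ [s])) ≤
        plen d (a :: (l1 ++ [s])) + plen d (s :: (l2 ++ [s]))
  | [], a => by
      have h1 := plen_skip d hd htri a s (l2 ++ [s])
      have h2 : plen d (a :: ([] ++ [s])) = d a s := by simp [plen]
      simp only [List.nil_append] at h1 h2 ⊢
      linarith
  | x :: t, a => by
      have := plen_concat d hd htri s l2 t x
      simp only [List.cons_append, plen_cons_cons]
      linarith

variable [MetricSpace X] [DecidableEq X]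
set_option linter.unusedSectionVars false

lemma routeLen_nonneg (s : X) (l : List X) : 0 ≤ routeLen dist s l := by
  rw [routeLen_eq_plen]
  exact plen_nonneg _ (fun x y => dist_nonneg) _

lemma tourCost_nonneg (s : X) (S : Finset X) : 0 ≤ tourCost dist s S := by
  rw [tourCost]
  split
  · exact le_refl 0
  · exact Real.sInf_nonneg (by rintro x ⟨l, -, -, rfl⟩; exact routeLen_nonneg s l)

lemma tourCost_bddBelow (s : X) (S : Finset X) :
    BddBelow {x : ℝ | ∃ l : List X, l.Nodup ∧ l.toFinset = S ∧ x = routeLen dist s l} :=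
  ⟨0, by rintro x ⟨l, -, -, rfl⟩; exact routeLen_nonneg s l⟩

lemma tourCost_set_nonempty (s : X) (S : Finset X) :
    {x : ℝ | ∃ l : List X, l.Nodup ∧ l.toFinset = S ∧ x = routeLen dist s l}.Nonempty :=
  ⟨routeLen dist s S.toList, S.toList, S.nodup_toList, S.toList_toFinset, rfl⟩

lemma tourCost_le (s : X) {S : Finset X} (hS : S ≠ ∅) {l : List X}
    (h1 : l.Nodup) (h2 : l.toFinset = S) : tourCost dist s S ≤ routeLen dist s l := by
  rw [tourCost, if_neg hS]
  exact csInf_le (tourCost_bddBelow s S) ⟨l, h1, h2, rfl⟩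

lemma tourCost_union_le (s : X) (A B : Finset X) :
    tourCost dist s (A ∪ B) ≤ tourCost dist s A + tourCost dist s B := by
  by_cases hA : A = ∅
  · subst hA
    have : tourCost dist s (∅ : Finset X) = 0 := by rw [tourCost, if_pos rfl]
    rw [Finset.empty_union, this, zero_add]
  by_cases hB : B = ∅
  · subst hB
    have : tourCost dist s (∅ : Finset X) = 0 := by rw [tourCost, if_pos rfl]
    rw [Finset.union_empty, this, add_zero]
  have hAB : A ∪ B ≠ ∅ := by
    intro h
    exact hA (Finset.union_eq_empty.mp h).1
  have key : ∀ xa ∈ {x : ℝ | ∃ l : List X, l.Nodup ∧ l.toFinset = A ∧ x = routeLen dist s l},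
      ∀ xb ∈ {x : ℝ | ∃ l : List X, l.Nodup ∧ l.toFinset = B ∧ x = routeLen dist s l},
      tourCost dist s (A ∪ B) ≤ xa + xb := by
    rintro xa ⟨la, ha1, ha2, rfl⟩ xb ⟨lb, hb1, hb2, rfl⟩
    set lb' : List X := lb.filter (fun x => decide (x ∉ la)) with hlb'
    have hsub : lb'.Sublist lb := List.filter_sublist (l := lb)
    have hmem' : ∀ x : X, x ∈ lb' ↔ x ∈ lb ∧ x ∉ la := by
      intro x
      simp [hlb', List.mem_filter]
    have hnodup : (la ++ lb').Nodup := by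
      refine List.Nodup.append ha1 (hb1.sublist hsub) ?_
      intro x hxla hxlb'
      exact ((hmem' x).mp hxlb').2 hxla
    have htofin : (la ++ lb').toFinset = A ∪ B := by
      ext x
      simp only [List.toFinset_append, Finset.mem_union, List.mem_toFinset, ← ha2, ← hb2,
        List.mem_toFinset]
      rw [hmem' x]
      by_cases hx : x ∈ la <;> simp [hx]
    have hlen : routeLen dist s (la ++ lb') ≤ routeLen dist s la + routeLen dist s lb := by
      rw [routeLen_eq_plen, routeLen_eq_plen, routeLen_eq_plen]
      calc plen dist (s :: ((la ++ lb') ++ [s]))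
          ≤ plen dist (s :: (la ++ [s])) + plen dist (s :: (lb' ++ [s])) :=
            plen_concat dist (fun _ _ => dist_nonneg) (fun x y z => dist_triangle x y z) s lb' la s
        _ ≤ plen dist (s :: (la ++ [s])) + plen dist (s :: (lb ++ [s])) := by
            linarith [plen_sublist dist (fun _ _ => dist_nonneg)
              (fun x y z => dist_triangle x y z) hsub s s]
    exact le_trans (tourCost_le s hAB hnodup htofin) hlen
  have hca : tourCost dist s A =
      sInf {x : ℝ | ∃ l : List X, l.Nodup ∧ l.toFinset = A ∧ x = routeLen dist s l} := by
    rw [tourCost, if_neg hA]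
  have hcb : tourCost dist s B =
      sInf {x : ℝ | ∃ l : List X, l.Nodup ∧ l.toFinset = B ∧ x = routeLen dist s l} := by
    rw [tourCost, if_neg hB]
  have step1 : ∀ xb ∈ {x : ℝ | ∃ l : List X, l.Nodup ∧ l.toFinset = B ∧ x = routeLen dist s l},
      tourCost dist s (A ∪ B) ≤ tourCost dist s A + xb := by
    intro xb hxb
    have h1 : tourCost dist s (A ∪ B) - xb ≤
        sInf {x : ℝ | ∃ l : List X, l.Nodup ∧ l.toFinset = A ∧ x = routeLen dist s l} := by
      refine le_csInf (tourCost_set_nonempty s A) ?_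
      intro xa hxa
      have := key xa hxa xb hxb
      linarith
    rw [← hca] at h1
    linarith
  have h2 : tourCost dist s (A ∪ B) - tourCost dist s A ≤
      sInf {x : ℝ | ∃ l : List X, l.Nodup ∧ l.toFinset = B ∧ x = routeLen dist s l} := by
    refine le_csInf (tourCost_set_nonempty s B) ?_
    intro xb hxb
    have := step1 xb hxb
    linarith
  rw [← hcb] at h2
  linarith

end Aux

section Sums

lemma sum_double (f : ℕ → ℝ) (ℓ : ℕ) :
    ∑ m ∈ Finset.Icc 1 (2 * ℓ), f m = ∑ k ∈ Finset.Icc 1 ℓ, (f (2 * k - 1) + f (2 * k)) := by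
  induction ℓ with
  | zero => simp
  | succ n ih =>
      rw [show 2 * (n + 1) = (2 * n + 1) + 1 by ring]
      rw [Finset.sum_Icc_succ_top (by omega) f, Finset.sum_Icc_succ_top (by omega) f,
        Finset.sum_Icc_succ_top (show 1 ≤ n + 1 by omega), ih]
      have e1 : 2 * (n + 1) - 1 = 2 * n + 1 := by omega
      have e2 : 2 * (n + 1) = 2 * n + 1 + 1 := by omega
      rw [e1, e2]
      ring

lemma sum_periodic_shift (g : ℕ → ℝ) (ℓ : ℕ) (h : ∀ k, g (k + ℓ) = g k) :
    ∑ m ∈ Finset.Icc 1 (2 * ℓ), g m = 2 * ∑ k ∈ Finset.Icc 1 ℓ, g k := by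
  have h1 : ∀ n : ℕ, Finset.Icc 1 n = Finset.Ioc 0 n := by
    intro n; ext x; simp; omega
  rw [h1, h1]
  have hcons := Finset.sum_Ioc_consecutive g (Nat.zero_le ℓ) (show ℓ ≤ 2 * ℓ by omega)
  have hshift : ∑ m ∈ Finset.Ioc ℓ (2 * ℓ), g m = ∑ k ∈ Finset.Ioc 0 ℓ, g k := by
    rw [show 2 * ℓ = ℓ + ℓ by ring, show Finset.Ioc ℓ (ℓ + ℓ) = Finset.Ioc (ℓ + 0) (ℓ + ℓ) by
      rw [Nat.add_zero], ← Finset.map_add_left_Ioc, Finset.sum_map]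
    refine Finset.sum_congr rfl fun k _ => ?_
    simpa [addLeftEmbedding, Nat.add_comm] using h k
  linarith

end Sums

/-- Rounding the turnover times down to powers of 2 at most doubles the min-avg value. -/
theorem minAvg_rounding_powers_of_two {X : Type*} [MetricSpace X] [DecidableEq X]
    (s : X) (V : Finset X) (τ : X → ℕ) (hτ : ∀ v ∈ V, 1 ≤ τ v) :
    minAvgVal s V (fun v => 2 ^ Nat.log 2 (τ v)) ≤ 2 * minAvgVal s V τ := by
  set Sτ : Set ℝ := {x : ℝ | ∃ (J : ℕ → Finset X) (ℓ : ℕ), 1 ≤ ℓ ∧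
    (∀ k : ℕ, J (k + ℓ) = J k) ∧ FeasibleOn V τ J ∧
    x = (∑ k ∈ Finset.Icc 1 ℓ, tourCost dist s (J k)) / (ℓ : ℝ)} with hSτ
  set Sτ' : Set ℝ := {x : ℝ | ∃ (J : ℕ → Finset X) (ℓ : ℕ), 1 ≤ ℓ ∧
    (∀ k : ℕ, J (k + ℓ) = J k) ∧ FeasibleOn V (fun v => 2 ^ Nat.log 2 (τ v)) J ∧
    x = (∑ k ∈ Finset.Icc 1 ℓ, tourCost dist s (J k)) / (ℓ : ℝ)} with hSτ'
  have hbdd' : BddBelow Sτ' := by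
    refine ⟨0, ?_⟩
    rintro x ⟨J, ℓ, hℓ, -, -, rfl⟩
    exact div_nonneg (Finset.sum_nonneg fun k _ => tourCost_nonneg s (J k)) (Nat.cast_nonneg ℓ)
  have hne : Sτ.Nonempty := by
    refine ⟨(∑ k ∈ Finset.Icc 1 1, tourCost dist s ((fun _ : ℕ => V) k)) / ((1 : ℕ) : ℝ),
      fun _ => V, 1, le_refl 1, fun _ => rfl, ⟨fun _ => Finset.Subset.refl V, ?_⟩, rfl⟩
    intro v hv t
    exact ⟨t + 1, by omega, by have := hτ v hv; omega, hv⟩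
  have key : ∀ x ∈ Sτ, minAvgVal s V (fun v => 2 ^ Nat.log 2 (τ v)) ≤ 2 * x := by
    rintro x ⟨J, ℓ, hℓ, hper, ⟨hJ1, hJ2⟩, rfl⟩
    set J' : ℕ → Finset X := fun k => J (2 * k + 2 * ℓ - 1) ∪ J (2 * k + 2 * ℓ) with hJ'
    have hper2 : ∀ n : ℕ, J (n + 2 * ℓ) = J n := by
      intro n
      have e : n + 2 * ℓ = n + ℓ + ℓ := by omega
      rw [e, hper, hper]
    have hper' : ∀ k : ℕ, J' (k + ℓ) = J' k := by
      intro k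
      have e1 : 2 * (k + ℓ) + 2 * ℓ - 1 = (2 * k + 2 * ℓ - 1) + 2 * ℓ := by omega
      have e2 : 2 * (k + ℓ) + 2 * ℓ = (2 * k + 2 * ℓ) + 2 * ℓ := by omega
      show J (2 * (k + ℓ) + 2 * ℓ - 1) ∪ J (2 * (k + ℓ) + 2 * ℓ) =
        J (2 * k + 2 * ℓ - 1) ∪ J (2 * k + 2 * ℓ)
      rw [e1, e2, hper2, hper2]
    have hfeas' : FeasibleOn V (fun v => 2 ^ Nat.log 2 (τ v)) J' := by
      constructor
      · intro k
        exact Finset.union_subset (hJ1 _) (hJ1 _)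
      · intro v hv t
        obtain ⟨m, hm1, hm2, hm3⟩ := hJ2 v hv (2 * t + 2 * ℓ)
        have hpow : τ v < 2 * 2 ^ Nat.log 2 (τ v) := by
          have := Nat.lt_pow_succ_log_self (by norm_num : 1 < 2) (τ v)
          rw [pow_succ] at this
          omega
        refine ⟨(m + 1) / 2 - ℓ, by omega,
          show (m + 1) / 2 - ℓ ≤ t + 2 ^ Nat.log 2 (τ v) by omega, ?_⟩
        have hcase : m = 2 * ((m + 1) / 2 - ℓ) + 2 * ℓ - 1 ∨
            m = 2 * ((m + 1) / 2 - ℓ) + 2 * ℓ := by omega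
        show v ∈ J (2 * ((m + 1) / 2 - ℓ) + 2 * ℓ - 1) ∪ J (2 * ((m + 1) / 2 - ℓ) + 2 * ℓ)
        rw [Finset.mem_union]
        rcases hcase with h | h
        · exact Or.inl (h ▸ hm3)
        · exact Or.inr (h ▸ hm3)
    have hℓpos : (0 : ℝ) < (ℓ : ℝ) := by exact_mod_cast hℓ
    have hsum : ∑ k ∈ Finset.Icc 1 ℓ, tourCost dist s (J' k) ≤
        2 * ∑ k ∈ Finset.Icc 1 ℓ, tourCost dist s (J k) := by
      have step : ∑ k ∈ Finset.Icc 1 ℓ, tourCost dist s (J' k) ≤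
          ∑ k ∈ Finset.Icc 1 ℓ, (tourCost dist s (J (2 * k - 1)) + tourCost dist s (J (2 * k))) := by
        refine Finset.sum_le_sum ?_
        intro k hk
        rw [Finset.mem_Icc] at hk
        have e1 : 2 * k + 2 * ℓ - 1 = (2 * k - 1) + 2 * ℓ := by omega
        have e2 : 2 * k + 2 * ℓ = (2 * k) + 2 * ℓ := rfl
        have : J' k = J (2 * k - 1) ∪ J (2 * k) := by
          show J (2 * k + 2 * ℓ - 1) ∪ J (2 * k + 2 * ℓ) = J (2 * k - 1) ∪ J (2 * k)
          rw [e1, hper2, hper2]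
        rw [this]
        exact tourCost_union_le s _ _
      have eq1 : ∑ k ∈ Finset.Icc 1 ℓ,
          (tourCost dist s (J (2 * k - 1)) + tourCost dist s (J (2 * k))) =
          ∑ m ∈ Finset.Icc 1 (2 * ℓ), tourCost dist s (J m) :=
        (sum_double (fun m => tourCost dist s (J m)) ℓ).symm
      have eq2 : ∑ m ∈ Finset.Icc 1 (2 * ℓ), tourCost dist s (J m) =
          2 * ∑ k ∈ Finset.Icc 1 ℓ, tourCost dist s (J k) :=
        sum_periodic_shift (fun m => tourCost dist s (J m)) ℓ (fun k => by simp [hper k])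
      linarith
    have hmem : (∑ k ∈ Finset.Icc 1 ℓ, tourCost dist s (J' k)) / (ℓ : ℝ) ∈ Sτ' :=
      ⟨J', ℓ, hℓ, hper', hfeas', rfl⟩
    have h1 : minAvgVal s V (fun v => 2 ^ Nat.log 2 (τ v)) ≤
        (∑ k ∈ Finset.Icc 1 ℓ, tourCost dist s (J' k)) / (ℓ : ℝ) := by
      rw [minAvgVal, ← hSτ']
      exact csInf_le hbdd' hmem
    calc minAvgVal s V (fun v => 2 ^ Nat.log 2 (τ v)) ≤
        (∑ k ∈ Finset.Icc 1 ℓ, tourCost dist s (J' k)) / (ℓ : ℝ) := h1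
      _ ≤ (2 * ∑ k ∈ Finset.Icc 1 ℓ, tourCost dist s (J k)) / (ℓ : ℝ) := by gcongr
      _ = 2 * ((∑ k ∈ Finset.Icc 1 ℓ, tourCost dist s (J k)) / (ℓ : ℝ)) := by ring
  have h2 : minAvgVal s V (fun v => 2 ^ Nat.log 2 (τ v)) / 2 ≤ sInf Sτ := by
    refine le_csInf hne ?_
    intro x hx
    have := key x hx
    linarith
  have h3 : minAvgVal s V τ = sInf Sτ := by rw [minAvgVal, ← hSτ]
  linarith [h2, h3.ge, h3.le]
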